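/- Let (X,t1,t2) and (Y,γ1,γ2) be bitopological spaces whose lattices of basis sets B1 (for X) and D1 (for Y) are core regular double Stone algebras with pseudocomplement u* = Cl_1(u)^c and dual pseudocomplement u+ = Cl_2(u^c) (closures taken in the respective space), and let f : X → Y be bi-continuous (continuous from t_i to γ_i for i = 1,2). Then the induced map f^{-1} : D1 → B1 is a CRDSA homomorphism if and only if for every u ∈ D1, f^{-1}(Bd_1(u)) ⊆ Cl_1(f^{-1}(u)) and f^{-1}(Bd_2(u^c)) ⊆ Cl_2(f^{-1}(u^c)), where Bd_i is taken in Y and Cl_i of the preimages is taken in X. -/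

import Mathlib

open Topology

/-- `B1 = t1 ∩ δ2`: sets that are `t1`-open and `t2`-closed. -/
def B1 {X : Type*} (t1 t2 : TopologicalSpace X) : Set (Set X) :=
  {u : Set X | IsOpen[t1] u ∧ IsClosed[t2] u}

/-- The lattice `(B1,∪,∩,∅,X)` of basis sets of the bitopological space `(X,t1,t2)`
is a core regular double Stone algebra with pseudocomplement `u* = Cl₁(u)ᶜ` and
dual pseudocomplement `u⁺ = Cl₂(uᶜ)`. -/
def IsCRDSABase {X : Type*} (t1 t2 : TopologicalSpace X) : Prop :=
  (∀ u ∈ B1 t1 t2, (closure[t1] u)ᶜ ∈ B1 t1 t2 ∧ closure[t2] uᶜ ∈ B1 t1 t2) ∧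
  (∀ u ∈ B1 t1 t2, ∀ w ∈ B1 t1 t2,
    (w ∩ u = ∅ ↔ w ⊆ (closure[t1] u)ᶜ) ∧
    (w ∪ u = Set.univ ↔ closure[t2] uᶜ ⊆ w)) ∧
  (∀ u ∈ B1 t1 t2,
    (closure[t1] u)ᶜ ∪ (closure[t1] ((closure[t1] u)ᶜ))ᶜ = Set.univ ∧
    closure[t2] uᶜ ∩ closure[t2] ((closure[t2] uᶜ)ᶜ) = ∅) ∧
  (∀ u ∈ B1 t1 t2, ∀ w ∈ B1 t1 t2,
    (closure[t1] u)ᶜ = (closure[t1] w)ᶜ → closure[t2] uᶜ = closure[t2] wᶜ → u = w) ∧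
  (∃ k ∈ B1 t1 t2, (closure[t1] k)ᶜ = ∅ ∧ closure[t2] kᶜ = Set.univ)


lemma aux_preimage_closure {X Y : Type*} [TopologicalSpace X] [TopologicalSpace Y]
    {f : X → Y} (hf : Continuous f) {u : Set Y}
    (h : f ⁻¹' (frontier u) ⊆ closure (f ⁻¹' u)) :
    f ⁻¹' (closure u) = closure (f ⁻¹' u) := by
  apply Set.Subset.antisymm
  · intro x hx
    have hx' : f x ∈ interior u ∪ frontier u := by
      rw [← closure_eq_interior_union_frontier]; exact hx
    rcases hx' with h1 | h2
    · exact subset_closure (interior_subset h1 : f x ∈ u)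
    · exact h h2
  · exact hf.closure_preimage_subset u

/-- let `(X,t1,t2)` and `(Y,γ1,γ2)` be bitopological spaces whose
lattices of basis sets `B1` (for `X`) and `D1` (for `Y`) are core regular double
Stone algebras with `u* = Cl₁(u)ᶜ` and `u⁺ = Cl₂(uᶜ)`, and let `f : X → Y` be
bi-continuous. Then the induced map `u ↦ f ⁻¹' u` from `D1` to `B1` is a CRDSA
homomorphism (it preserves ∪, ∩, ∅, the whole space, and the (dual)
pseudocomplements) iff for every `u ∈ D1`, `f ⁻¹' (Bd₁ u) ⊆ Cl₁ (f ⁻¹' u)` and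
`f ⁻¹' (Bd₂ uᶜ) ⊆ Cl₂ (f ⁻¹' uᶜ)`. -/
theorem preimage_CRDSA_hom_iff_boundary {X Y : Type*}
    (t1 t2 : TopologicalSpace X) (γ1 γ2 : TopologicalSpace Y)
    (hX : IsCRDSABase t1 t2) (hY : IsCRDSABase γ1 γ2)
    (f : X → Y) (hf1 : Continuous[t1, γ1] f) (hf2 : Continuous[t2, γ2] f) :
    -- `f ⁻¹' ·` is a CRDSA homomorphism from D1 to B1:
    ((∀ u ∈ B1 γ1 γ2, f ⁻¹' u ∈ B1 t1 t2) ∧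
     (∀ u ∈ B1 γ1 γ2, ∀ w ∈ B1 γ1 γ2, f ⁻¹' (u ∪ w) = f ⁻¹' u ∪ f ⁻¹' w) ∧
     (∀ u ∈ B1 γ1 γ2, ∀ w ∈ B1 γ1 γ2, f ⁻¹' (u ∩ w) = f ⁻¹' u ∩ f ⁻¹' w) ∧
     f ⁻¹' (∅ : Set Y) = (∅ : Set X) ∧
     f ⁻¹' (Set.univ : Set Y) = Set.univ ∧
     (∀ u ∈ B1 γ1 γ2, f ⁻¹' ((closure[γ1] u)ᶜ) = (closure[t1] (f ⁻¹' u))ᶜ) ∧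
     (∀ u ∈ B1 γ1 γ2, f ⁻¹' (closure[γ2] uᶜ) = closure[t2] (f ⁻¹' uᶜ))) ↔
    (∀ u ∈ B1 γ1 γ2,
      f ⁻¹' (@frontier Y γ1 u) ⊆ closure[t1] (f ⁻¹' u) ∧
      f ⁻¹' (@frontier Y γ2 uᶜ) ⊆ closure[t2] (f ⁻¹' uᶜ)) := by
  constructor
  · rintro ⟨-, -, -, -, -, h6, h7⟩ u hu
    refine ⟨?_, ?_⟩
    · have key : f ⁻¹' (closure[γ1] u) = closure[t1] (f ⁻¹' u) := by
        have := congrArg compl (h6 u hu)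
        simpa [Set.preimage_compl] using this
      exact key ▸ Set.preimage_mono (@frontier_subset_closure Y γ1 u)
    · exact (h7 u hu) ▸ Set.preimage_mono (@frontier_subset_closure Y γ2 uᶜ)
  · intro h
    refine ⟨fun u hu => ⟨@IsOpen.preimage X Y t1 γ1 f hf1 u hu.1, @IsClosed.preimage X Y t2 γ2 f hf2 u hu.2⟩,
      fun u _ w _ => rfl, fun u _ w _ => rfl, rfl, rfl, ?_, ?_⟩
    · intro u hu
      have key : f ⁻¹' (closure[γ1] u) = closure[t1] (f ⁻¹' u) :=
        @aux_preimage_closure X Y t1 γ1 f hf1 u (h u hu).1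
      rw [Set.preimage_compl, key]
    · intro u hu
      exact @aux_preimage_closure X Y t2 γ2 f hf2 uᶜ (h u hu).2
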